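/- Let n ≥ 1 and let K be a field in which every polynomial of degree exactly n has a root. A linear map T : M_n(K) → M_n(K) preserves the L-relation if and only if there exist P ∈ GL_n(K) and X ∈ M_n(K) such that T(A) = PAX for all A ∈ M_n(K). -/

import Mathlib

open Matrix Polynomial

/-- The row space of a square matrix: the span of its rows. -/
def rowSpace {K : Type*} [Field K] {n : ℕ} (A : Matrix (Fin n) (Fin n) K) :
    Submodule K (Fin n → K) :=
  Submodule.span K (Set.range A)

namespace LGreenAux

variable {K : Type*} [Field K] {n : ℕ}

/-- row of a vecMulVec -/
lemma vmv_row (c v : Fin n → K) (i : Fin n) :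
    Matrix.vecMulVec c v i = c i • v := by
  ext j; simp [Matrix.vecMulVec_apply, Pi.smul_apply, smul_eq_mul]

lemma vmv_zero_left (v : Fin n → K) : Matrix.vecMulVec (0 : Fin n → K) v = 0 := by
  ext i j; simp [Matrix.vecMulVec_apply]

lemma vmv_zero_right (c : Fin n → K) : Matrix.vecMulVec c (0 : Fin n → K) = 0 := by
  ext i j; simp [Matrix.vecMulVec_apply]

lemma vmv_add_left (c c' v : Fin n → K) :
    Matrix.vecMulVec (c + c') v = Matrix.vecMulVec c v + Matrix.vecMulVec c' v := by
  ext i j; simp [Matrix.vecMulVec_apply, add_mul]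

lemma vmv_add_right (c v v' : Fin n → K) :
    Matrix.vecMulVec c (v + v') = Matrix.vecMulVec c v + Matrix.vecMulVec c v' := by
  ext i j; simp [Matrix.vecMulVec_apply, mul_add]

lemma vmv_smul_left (a : K) (c v : Fin n → K) :
    Matrix.vecMulVec (a • c) v = a • Matrix.vecMulVec c v := by
  ext i j; simp [Matrix.vecMulVec_apply, mul_assoc]

lemma vmv_smul_right (a : K) (c v : Fin n → K) :
    Matrix.vecMulVec c (a • v) = a • Matrix.vecMulVec c v := by
  ext i j; simp [Matrix.vecMulVec_apply]; ring

lemma vmv_smul_comm (a : K) (c v : Fin n → K) :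
    Matrix.vecMulVec (a • c) v = Matrix.vecMulVec c (a • v) := by
  rw [vmv_smul_left, vmv_smul_right]

/-- cancel on the right : if `y ≠ 0` and `vecMulVec u y = vecMulVec u' y` then `u = u'`. -/
lemma vmv_cancel_right {y : Fin n → K} (hy : y ≠ 0) {u u' : Fin n → K}
    (h : Matrix.vecMulVec u y = Matrix.vecMulVec u' y) : u = u' := by
  obtain ⟨j, hj⟩ := Function.ne_iff.mp hy
  funext i
  have := congrFun (congrFun h i) j
  simp only [Matrix.vecMulVec_apply] at this
  exact mul_right_cancel₀ hj this

/-- cancel on the left : if `u ≠ 0` and `vecMulVec u y = vecMulVec u y'` then `y = y'`. -/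
lemma vmv_cancel_left {u : Fin n → K} (hu : u ≠ 0) {y y' : Fin n → K}
    (h : Matrix.vecMulVec u y = Matrix.vecMulVec u y') : y = y' := by
  obtain ⟨i, hi⟩ := Function.ne_iff.mp hu
  funext j
  have := congrFun (congrFun h i) j
  simp only [Matrix.vecMulVec_apply] at this
  exact mul_left_cancel₀ hi this

lemma vmv_eq_zero_left {u y : Fin n → K} (hy : y ≠ 0)
    (h : Matrix.vecMulVec u y = 0) : u = 0 :=
  vmv_cancel_right hy (by rw [h, vmv_zero_left])

/-- the linear map `c ↦ vecMulVec c v` -/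
def vmvL (v : Fin n → K) : (Fin n → K) →ₗ[K] Matrix (Fin n) (Fin n) K where
  toFun c := Matrix.vecMulVec c v
  map_add' c c' := vmv_add_left c c' v
  map_smul' a c := by simp [vmv_smul_left]

@[simp] lemma vmvL_apply (v c : Fin n → K) : vmvL v c = Matrix.vecMulVec c v := rfl

lemma rows_mem_rowSpace (A : Matrix (Fin n) (Fin n) K) (i : Fin n) :
    A i ∈ rowSpace A :=
  Submodule.subset_span ⟨i, rfl⟩

lemma rowSpace_eq_bot_iff (A : Matrix (Fin n) (Fin n) K) :
    rowSpace A = ⊥ ↔ A = 0 := by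
  constructor
  · intro h
    ext i j
    have := rows_mem_rowSpace A i
    rw [h, Submodule.mem_bot] at this
    simp [congrFun this j]
  · rintro rfl
    apply le_bot_iff.mp
    rw [rowSpace, Submodule.span_le]
    rintro x ⟨i, rfl⟩
    simp [Submodule.mem_bot]
    rfl

lemma rowSpace_vecMulVec {c : Fin n → K} (v : Fin n → K) (hc : c ≠ 0) :
    rowSpace (Matrix.vecMulVec c v) = Submodule.span K {v} := by
  apply le_antisymm
  · rw [rowSpace, Submodule.span_le]
    rintro x ⟨i, rfl⟩
    rw [vmv_row]
    exact Submodule.smul_mem _ _ (Submodule.mem_span_singleton_self v)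
  · rw [Submodule.span_le, Set.singleton_subset_iff]
    obtain ⟨i, hi⟩ := Function.ne_iff.mp hc
    have hmem := Submodule.smul_mem (rowSpace (Matrix.vecMulVec c v)) (c i)⁻¹
      (rows_mem_rowSpace (Matrix.vecMulVec c v) i)
    rwa [vmv_row, smul_smul, inv_mul_cancel₀ hi, one_smul] at hmem

/-- apply a functional to each row -/
def rowApp (g : (Fin n → K) →ₗ[K] K) :
    Matrix (Fin n) (Fin n) K →ₗ[K] (Fin n → K) where
  toFun N := fun i => g (N i)
  map_add' N N' := by funext i; exact map_add g (N i) (N' i)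
  map_smul' a N := by funext i; exact map_smul g a (N i)

@[simp] lemma rowApp_apply (g : (Fin n → K) →ₗ[K] K) (N : Matrix (Fin n) (Fin n) K) (i : Fin n) :
    rowApp g N i = g (N i) := rfl

/-- dual pair for two independent vectors -/
lemma exists_dual_pair {w1 w2 : Fin n → K}
    (hind : ∀ a b : K, a • w1 + b • w2 = 0 → a = 0 ∧ b = 0) :
    ∃ g1 g2 : (Fin n → K) →ₗ[K] K, g1 w1 = 1 ∧ g1 w2 = 0 ∧ g2 w1 = 0 ∧ g2 w2 = 1 := by
  let β : (Fin 2 → K) →ₗ[K] (Fin n → K) :=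
    (LinearMap.proj (0 : Fin 2)).smulRight w1 + (LinearMap.proj (1 : Fin 2)).smulRight w2
  have hβ : ∀ p : Fin 2 → K, β p = p 0 • w1 + p 1 • w2 := fun p => rfl
  have hker : LinearMap.ker β = ⊥ := by
    rw [LinearMap.ker_eq_bot']
    intro p hp
    rw [hβ] at hp
    obtain ⟨h0, h1⟩ := hind _ _ hp
    funext i
    fin_cases i <;> simp [h0, h1]
  obtain ⟨π, hπ⟩ := β.exists_leftInverse_of_injective hker
  have h1 : β (Pi.single 0 1) = w1 := by rw [hβ]; simp
  have h2 : β (Pi.single 1 1) = w2 := by rw [hβ]; simp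
  have hπ1 : π w1 = Pi.single 0 1 := by
    rw [← h1]
    exact LinearMap.ext_iff.mp hπ (Pi.single 0 1)
  have hπ2 : π w2 = Pi.single 1 1 := by
    rw [← h2]
    exact LinearMap.ext_iff.mp hπ (Pi.single 1 1)
  refine ⟨(LinearMap.proj (0 : Fin 2)).comp π, (LinearMap.proj (1 : Fin 2)).comp π, ?_, ?_, ?_, ?_⟩ <;>
    simp [hπ1, hπ2]


/-- Over a field where every degree-`n` polynomial has a root, every endomorphism of `Kⁿ`
has an eigenvector (n ≥ 1). -/
lemma exists_eigen (hK : ∀ p : Polynomial K, p.degree = n → ∃ x : K, p.eval x = 0)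
    (E : (Fin n → K) →ₗ[K] (Fin n → K)) :
    ∃ (t : K) (w : Fin n → K), w ≠ 0 ∧ E w = t • w := by
  classical
  set Em := LinearMap.toMatrix' E with hEm
  have hmon : Em.charpoly.Monic := Em.charpoly_monic
  have hdeg : Em.charpoly.degree = n := by
    rw [Polynomial.degree_eq_natDegree hmon.ne_zero]
    rw [Matrix.charpoly_natDegree_eq_dim]
    norm_cast
    exact Fintype.card_fin n
  obtain ⟨t, ht⟩ := hK _ hdeg
  have hdet : (Matrix.diagonal (fun _ : Fin n => t) - Em).det = 0 := by
    have hmap : ((Polynomial.evalRingHom t).mapMatrix (Matrix.charmatrix Em))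
        = Matrix.diagonal (fun _ : Fin n => t) - Em := by
      ext i j
      by_cases h : i = j
      · subst h
        simp [Matrix.charmatrix_apply_eq]
      · simp [Matrix.charmatrix_apply_ne _ _ _ h, Matrix.diagonal_apply_ne _ h]
    have := (RingHom.map_det (Polynomial.evalRingHom t) (Matrix.charmatrix Em)).symm
    rw [hmap] at this
    rw [this]
    exact ht
  obtain ⟨w, hw0, hw⟩ := (Matrix.exists_mulVec_eq_zero_iff).mpr hdet
  refine ⟨t, w, hw0, ?_⟩
  have h1 : Em.mulVec w = E w := by
    rw [← Matrix.toLin'_apply, Matrix.toLin'_toMatrix']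
  have h2 : (Matrix.diagonal (fun _ : Fin n => t)).mulVec w = t • w := by
    funext i
    simp [Matrix.mulVec_diagonal]
  rw [Matrix.sub_mulVec, h1, h2, sub_eq_zero] at hw
  exact hw.symm

/-- Key lemma: the common row space can not contain two independent vectors. -/
lemma key_lemma (hK : ∀ p : Polynomial K, p.degree = n → ∃ x : K, p.eval x = 0)
    (L : (Fin n → K) →ₗ[K] Matrix (Fin n) (Fin n) K) (W : Submodule K (Fin n → K))
    (HW : ∀ c : Fin n → K, c ≠ 0 → rowSpace (L c) = W)
    {w1 w2 : Fin n → K} (h1 : w1 ∈ W) (h2 : w2 ∈ W)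
    (hind : ∀ a b : K, a • w1 + b • w2 = 0 → a = 0 ∧ b = 0) : False := by
  obtain ⟨g1, g2, hg11, hg12, hg21, hg22⟩ := exists_dual_pair hind
  set U1 : (Fin n → K) →ₗ[K] (Fin n → K) := (rowApp g1) ∘ₗ L with hU1
  set U2 : (Fin n → K) →ₗ[K] (Fin n → K) := (rowApp g2) ∘ₗ L with hU2
  have hcomb : ∀ c : Fin n → K, c ≠ 0 → ∀ a b : K,
      a • U1 c + b • U2 c = 0 → a = 0 ∧ b = 0 := by
    intro c hc a b hab
    set h : (Fin n → K) →ₗ[K] K := a • g1 + b • g2 with hh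
    have hker : rowSpace (L c) ≤ LinearMap.ker h := by
      rw [rowSpace, Submodule.span_le]
      rintro x ⟨i, rfl⟩
      have := congrFun hab i
      simp only [Pi.add_apply, Pi.smul_apply, Pi.zero_apply, smul_eq_mul] at this
      simp only [hU1, hU2, LinearMap.comp_apply, rowApp_apply] at this
      simp only [SetLike.mem_coe, LinearMap.mem_ker, hh, LinearMap.add_apply,
        LinearMap.smul_apply, smul_eq_mul]
      exact this
    rw [HW c hc] at hker
    have e1 : h w1 = 0 := hker h1
    have e2 : h w2 = 0 := hker h2
    simp only [hh, LinearMap.add_apply, LinearMap.smul_apply, smul_eq_mul,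
      hg11, hg12, hg21, hg22, mul_one, mul_zero, add_zero, zero_add] at e1 e2
    exact ⟨e1, e2⟩
  have hinj : Function.Injective U1 := by
    rw [← LinearMap.ker_eq_bot]
    rw [LinearMap.ker_eq_bot']
    intro c hc
    by_contra hc0
    have := (hcomb c hc0 1 0 (by rw [one_smul, zero_smul, add_zero, hc])).1
    exact one_ne_zero this
  have hsurj : Function.Surjective U1 := (LinearMap.injective_iff_surjective).mp hinj
  let eU := LinearEquiv.ofBijective U1 ⟨hinj, hsurj⟩
  set E : (Fin n → K) →ₗ[K] (Fin n → K) := U2 ∘ₗ (eU.symm : (Fin n → K) →ₗ[K] (Fin n → K))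
    with hE
  obtain ⟨t, w, hw0, hw⟩ := exists_eigen hK E
  set c := eU.symm w with hc
  have hc0 : c ≠ 0 := by
    intro h0
    apply hw0
    have : eU c = eU 0 := by rw [h0]
    rw [hc, eU.apply_symm_apply, map_zero] at this
    exact this
  have hU1c : U1 c = w := by
    have : eU c = w := by rw [hc, eU.apply_symm_apply]
    exact this
  have hU2c : U2 c = t • w := by
    rw [hE] at hw
    exact hw
  have := (hcomb c hc0 t (-1) (by
    rw [hU1c, hU2c, neg_one_smul, add_neg_cancel])).2
  norm_num at this

/-- If `vecMulVec (G c) y = vecMulVec (G' c) y'` for all `c`, with `y, y' ≠ 0` and `G`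
injective, then `G' = μ • G`. -/
lemma prop_of_vmv (hn : 1 ≤ n) {G G' : (Fin n → K) →ₗ[K] (Fin n → K)} {y y' : Fin n → K}
    (hy : y ≠ 0) (hy' : y' ≠ 0) (hG : Function.Injective G)
    (heq : ∀ c, Matrix.vecMulVec (G c) y = Matrix.vecMulVec (G' c) y') :
    ∃ μ : K, ∀ c, G' c = μ • G c := by
  have hrow : ∀ c i, G c i • y = G' c i • y' := by
    intro c i
    funext j
    have := congrFun (congrFun (heq c) i) j
    simpa [Matrix.vecMulVec_apply] using this
  set i0 : Fin n := ⟨0, hn⟩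
  set c0 : Fin n → K := Pi.single i0 1 with hc0def
  have hc0 : c0 ≠ 0 := by
    intro h
    have := congrFun h i0
    simp [hc0def] at this
  have hGc0 : G c0 ≠ 0 := by
    intro h
    exact hc0 (hG (by rw [h, map_zero]))
  obtain ⟨i1, hi1⟩ := Function.ne_iff.mp hGc0
  have hkey := hrow c0 i1
  set ν : K := (G c0 i1)⁻¹ * (G' c0 i1) with hν
  have hyν : y = ν • y' := by
    have := congrArg (fun z => (G c0 i1)⁻¹ • z) hkey
    simpa [smul_smul, inv_mul_cancel₀ hi1, hν, mul_assoc] using this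
  refine ⟨ν, fun c => ?_⟩
  obtain ⟨j1, hj1⟩ := Function.ne_iff.mp hy'
  funext i
  have := congrFun (hrow c i) j1
  rw [hyν] at this
  simp only [Pi.smul_apply, smul_eq_mul] at this
  have h0 : (G c i * ν - G' c i) * y' j1 = 0 := by linear_combination this
  rcases mul_eq_zero.mp h0 with h | h
  · have h2 : G c i * ν = G' c i := sub_eq_zero.mp h
    simp only [Pi.smul_apply, smul_eq_mul]
    rw [← h2]; ring
  · exact absurd h hj1


/-- A linear map all whose nonzero vectors are eigenvectors is scalar. -/
lemma scalar_of_all_eigen (hn : 1 ≤ n) (F : (Fin n → K) →ₗ[K] (Fin n → K))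
    (h : ∀ x : Fin n → K, x ≠ 0 → ∃ μ : K, F x = μ • x) :
    ∃ μ : K, ∀ x, F x = μ • x := by
  classical
  set i0 : Fin n := ⟨0, hn⟩
  have hsingle : ∀ i : Fin n, (Pi.single i 1 : Fin n → K) ≠ 0 := by
    intro i h0
    have := congrFun h0 i
    simp at this
  have hμ : ∀ i : Fin n, ∃ μ : K, F (Pi.single i 1) = μ • (Pi.single i 1 : Fin n → K) :=
    fun i => h _ (hsingle i)
  choose μ hμs using hμ
  have hall : ∀ i, μ i = μ i0 := by
    intro i
    by_cases hi : i = i0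
    · rw [hi]
    · have hx : (Pi.single i0 1 + Pi.single i 1 : Fin n → K) ≠ 0 := by
        intro h0
        have := congrFun h0 i0
        simp [Pi.single_eq_of_ne (Ne.symm hi)] at this
      obtain ⟨μ', hμ'⟩ := h _ hx
      rw [map_add, hμs i0, hμs i] at hμ'
      have h0 := congrFun hμ' i0
      have h1 := congrFun hμ' i
      simp only [Pi.add_apply, Pi.smul_apply, Pi.single_eq_same, smul_eq_mul,
        Pi.single_eq_of_ne hi, Pi.single_eq_of_ne (Ne.symm hi), mul_zero, mul_one,
        add_zero, zero_add] at h0 h1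
      rw [h1, h0]
  have hx : ∀ x : Fin n → K, x = ∑ i, x i • (Pi.single i 1 : Fin n → K) := by
    intro x
    funext j
    rw [Finset.sum_apply]
    simp [Pi.single_apply]
  refine ⟨μ i0, fun x => ?_⟩
  conv_lhs => rw [hx x]
  rw [map_sum]
  simp_rw [_root_.map_smul, hμs, hall]
  calc ∑ i, x i • μ i0 • (Pi.single i 1 : Fin n → K)
      = μ i0 • ∑ i, x i • (Pi.single i 1 : Fin n → K) := by
        rw [Finset.smul_sum]
        exact Finset.sum_congr rfl fun i _ => smul_comm _ _ _
    _ = μ i0 • x := by rw [← hx x]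


/-- Structure of a preserver on a rank-one class. -/
lemma structure_lemma (hn : 1 ≤ n)
    (hK : ∀ p : Polynomial K, p.degree = n → ∃ x : K, p.eval x = 0)
    (T : Matrix (Fin n) (Fin n) K →ₗ[K] Matrix (Fin n) (Fin n) K)
    (HT : ∀ A B : Matrix (Fin n) (Fin n) K,
        rowSpace A = rowSpace B → rowSpace (T A) = rowSpace (T B))
    (v : Fin n → K) (hv : ¬ ∀ c, T (Matrix.vecMulVec c v) = 0) :
    ∃ (y : Fin n → K) (G : (Fin n → K) →ₗ[K] (Fin n → K)), y ≠ 0 ∧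
      Function.Injective G ∧ ∀ c, T (Matrix.vecMulVec c v) = Matrix.vecMulVec (G c) y := by
  classical
  set i0 : Fin n := ⟨0, hn⟩
  set c0 : Fin n → K := Pi.single i0 1 with hc0def
  have hc0 : c0 ≠ 0 := by
    intro h
    have := congrFun h i0
    simp [hc0def] at this
  set W : Submodule K (Fin n → K) := rowSpace (T (Matrix.vecMulVec c0 v)) with hWdef
  have HW : ∀ c : Fin n → K, c ≠ 0 → rowSpace (T (Matrix.vecMulVec c v)) = W := by
    intro c hc
    exact HT _ _ (by rw [rowSpace_vecMulVec v hc, rowSpace_vecMulVec v hc0])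
  have hW0 : W ≠ ⊥ := by
    obtain ⟨c, hTc⟩ := not_forall.mp hv
    have hc : c ≠ 0 := by
      intro h
      apply hTc
      rw [h, vmv_zero_left, map_zero]
    intro hbot
    apply hTc
    rw [← rowSpace_eq_bot_iff, HW c hc, hbot]
  have hdep : ∀ w1 ∈ W, ∀ w2 ∈ W,
      ¬ (∀ a b : K, a • w1 + b • w2 = 0 → a = 0 ∧ b = 0) := by
    intro w1 hw1 w2 hw2 hind
    exact key_lemma hK (T ∘ₗ vmvL v) W (fun c hc => HW c hc) hw1 hw2 hind
  obtain ⟨y, hyW, hy0⟩ := Submodule.exists_mem_ne_zero_of_ne_bot hW0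
  have hspan : ∀ w ∈ W, ∃ a : K, w = a • y := by
    intro w hw
    have := hdep w hw y hyW
    push_neg at this
    obtain ⟨a, b, hab, hne⟩ := this
    by_cases ha : a = 0
    · exfalso
      rw [ha, zero_smul, zero_add] at hab
      rcases smul_eq_zero.mp hab with hb | hyz
      · exact hne ha hb
      · exact hy0 hyz
    · refine ⟨-(a⁻¹ * b), ?_⟩
      have h2 : a • w = -(b • y) := eq_neg_of_add_eq_zero_left hab
      calc w = a⁻¹ • (a • w) := by rw [smul_smul, inv_mul_cancel₀ ha, one_smul]
        _ = a⁻¹ • -(b • y) := by rw [h2]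
        _ = -(a⁻¹ * b) • y := by rw [smul_neg, smul_smul, neg_smul]
  obtain ⟨j0, hj0⟩ := Function.ne_iff.mp hy0
  let coeffL : Matrix (Fin n) (Fin n) K →ₗ[K] (Fin n → K) :=
    { toFun := fun N => fun i => (y j0)⁻¹ * N i j0
      map_add' := by intro N N'; funext i; simp [mul_add]
      map_smul' := by intro a N; funext i; simp [Matrix.smul_apply, smul_eq_mul]; ring }
  set G : (Fin n → K) →ₗ[K] (Fin n → K) := coeffL ∘ₗ (T ∘ₗ vmvL v) with hGdef
  have hGc : ∀ c i, G c i = (y j0)⁻¹ * (T (Matrix.vecMulVec c v)) i j0 := by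
    intro c i; rfl
  have heq : ∀ c, T (Matrix.vecMulVec c v) = Matrix.vecMulVec (G c) y := by
    intro c
    by_cases hc : c = 0
    · subst hc
      rw [vmv_zero_left, map_zero, map_zero, vmv_zero_left]
    · have hrows : ∀ i, ∃ a : K, T (Matrix.vecMulVec c v) i = a • y := by
        intro i
        apply hspan
        rw [← HW c hc]
        exact rows_mem_rowSpace _ i
      ext i j
      obtain ⟨a, ha⟩ := hrows i
      have haj0 := congrFun ha j0
      have haj := congrFun ha j
      simp only [Pi.smul_apply, smul_eq_mul] at haj0 haj
      have hGci : G c i = a := by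
        rw [hGc, haj0, mul_comm a (y j0), ← mul_assoc, inv_mul_cancel₀ hj0, one_mul]
      rw [Matrix.vecMulVec_apply, hGci, haj]
  have hGinj : Function.Injective G := by
    rw [← LinearMap.ker_eq_bot, LinearMap.ker_eq_bot']
    intro c hc
    by_contra hc0
    have h1 : T (Matrix.vecMulVec c v) = 0 := by rw [heq c, hc, vmv_zero_left]
    have h2 := HW c hc0
    rw [(rowSpace_eq_bot_iff _).mpr h1] at h2
    exact hW0 h2.symm
  exact ⟨y, G, hy0, hGinj, heq⟩


lemma single_one_ne_zero (i : Fin n) : (Pi.single i 1 : Fin n → K) ≠ 0 := by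
  intro h
  have := congrFun h i
  simp at this

/-- Pairwise proportionality of the `G` components. -/
lemma pairwise_prop (hn : 1 ≤ n)
    (hK : ∀ p : Polynomial K, p.degree = n → ∃ x : K, p.eval x = 0)
    (T : Matrix (Fin n) (Fin n) K →ₗ[K] Matrix (Fin n) (Fin n) K)
    (HT : ∀ A B : Matrix (Fin n) (Fin n) K,
        rowSpace A = rowSpace B → rowSpace (T A) = rowSpace (T B))
    {v v' y y' : Fin n → K} {G G' : (Fin n → K) →ₗ[K] (Fin n → K)}
    (hy : y ≠ 0) (hG : Function.Injective G)
    (hTv : ∀ c, T (Matrix.vecMulVec c v) = Matrix.vecMulVec (G c) y)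
    (hy' : y' ≠ 0) (hG' : Function.Injective G')
    (hTv' : ∀ c, T (Matrix.vecMulVec c v') = Matrix.vecMulVec (G' c) y') :
    ∃ μ : K, μ ≠ 0 ∧ ∀ c, G' c = μ • G c := by
  classical
  set i0 : Fin n := ⟨0, hn⟩
  have hGs : G (Pi.single i0 1) ≠ 0 := by
    intro h
    exact single_one_ne_zero i0 (hG (by rw [h, map_zero]))
  by_cases hdep : ∃ κ : K, y' = κ • y
  · -- y' is a multiple of y
    obtain ⟨κ, hκ⟩ := hdep
    have hκ0 : κ ≠ 0 := by
      rintro rfl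
      rw [zero_smul] at hκ
      exact hy' hκ
    have hBinj : Function.Injective (κ • G' : (Fin n → K) →ₗ[K] (Fin n → K)) := by
      intro x x' hxx
      apply hG'
      simp only [LinearMap.smul_apply] at hxx
      exact smul_right_injective _ hκ0 hxx
    have hBsurj := LinearMap.injective_iff_surjective.mp hBinj
    let eB := LinearEquiv.ofBijective (κ • G') ⟨hBinj, hBsurj⟩
    obtain ⟨t, w, hw0, hw⟩ := exists_eigen hK (-(eB.symm.toLinearMap ∘ₗ G))
    have h1 : eB.symm (G w) = -(t • w) := by
      simp only [LinearMap.neg_apply, LinearMap.comp_apply, LinearEquiv.coe_coe] at hw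
      rw [← hw, neg_neg]
    have h2 : G w + (t * κ) • G' w = 0 := by
      have h3 := congrArg eB h1
      rw [eB.apply_symm_apply, map_neg, _root_.map_smul] at h3
      have h4 : eB w = κ • G' w := rfl
      rw [h4, smul_smul] at h3
      rw [h3]
      simp
    set Ht : (Fin n → K) →ₗ[K] (Fin n → K) := G + (t * κ) • G' with hHtdef
    have hHtw : Ht w = 0 := by
      simp only [hHtdef, LinearMap.add_apply, LinearMap.smul_apply]
      exact h2
    have hTt : ∀ c, T (Matrix.vecMulVec c (v + t • v')) = Matrix.vecMulVec (Ht c) y := by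
      intro c
      rw [vmv_add_right, map_add, hTv c]
      have h5 : Matrix.vecMulVec c (t • v') = t • Matrix.vecMulVec c v' := vmv_smul_right t c v'
      rw [h5, _root_.map_smul, hTv' c, hκ]
      have h6 : (t : K) • Matrix.vecMulVec (G' c) (κ • y) = Matrix.vecMulVec ((t * κ) • G' c) y := by
        rw [vmv_smul_right, ← vmv_smul_left, vmv_smul_left, vmv_smul_left, smul_smul]
      rw [h6, ← vmv_add_left]
      rfl
    have hHtzero : ∀ c, Ht c = 0 := by
      by_cases hZ : ∀ c, T (Matrix.vecMulVec c (v + t • v')) = 0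
      · intro c
        apply vmv_eq_zero_left hy
        rw [← hTt c, hZ c]
      · obtain ⟨yt, Gt, hyt, hGt, hTt'⟩ := structure_lemma hn hK T HT _ hZ
        have heq2 : ∀ c, Matrix.vecMulVec (Gt c) yt = Matrix.vecMulVec (Ht c) y := by
          intro c
          rw [← hTt' c, hTt c]
        obtain ⟨μt, hμt⟩ := prop_of_vmv hn hyt hy hGt heq2
        by_cases hμ0 : μt = 0
        · intro c
          rw [hμt c, hμ0, zero_smul]
        · exfalso
          have h7 := hμt w
          rw [hHtw] at h7
          have h8 : Gt w = 0 := by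
            rcases smul_eq_zero.mp h7.symm with h | h
            · exact absurd h hμ0
            · exact h
          exact hw0 (hGt (by rw [h8, map_zero]))
    have ht0 : t ≠ 0 := by
      intro h
      have h9 := hHtzero (Pi.single i0 1)
      simp only [hHtdef, LinearMap.add_apply, LinearMap.smul_apply, h, zero_mul,
        zero_smul, add_zero] at h9
      exact hGs h9
    refine ⟨-(t * κ)⁻¹, by simp [ht0, hκ0], fun c => ?_⟩
    have h10 := hHtzero c
    simp only [hHtdef, LinearMap.add_apply, LinearMap.smul_apply] at h10
    have h11 : (t * κ) • G' c = -(G c) := eq_neg_of_add_eq_zero_right h10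
    have htκ : t * κ ≠ 0 := mul_ne_zero ht0 hκ0
    calc G' c = (t * κ)⁻¹ • ((t * κ) • G' c) := by
          rw [smul_smul, inv_mul_cancel₀ htκ, one_smul]
      _ = (t * κ)⁻¹ • -(G c) := by rw [h11]
      _ = -(t * κ)⁻¹ • G c := by rw [smul_neg, neg_smul]
  · -- y and y' independent
    have hind : ∀ a b : K, a • y + b • y' = 0 → a = 0 ∧ b = 0 := by
      intro a b hab
      by_cases hb : b = 0
      · rw [hb, zero_smul, add_zero] at hab
        rcases smul_eq_zero.mp hab with h | h
        · exact ⟨h, hb⟩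
        · exact absurd h hy
      · exfalso
        apply hdep
        refine ⟨-(b⁻¹ * a), ?_⟩
        have h2 : b • y' = -(a • y) := eq_neg_of_add_eq_zero_right hab
        calc y' = b⁻¹ • (b • y') := by rw [smul_smul, inv_mul_cancel₀ hb, one_smul]
          _ = b⁻¹ • -(a • y) := by rw [h2]
          _ = -(b⁻¹ * a) • y := by rw [smul_neg, smul_smul, neg_smul]
    have hsum : ∀ c, T (Matrix.vecMulVec c (v + v')) =
        Matrix.vecMulVec (G c) y + Matrix.vecMulVec (G' c) y' := by
      intro c
      rw [vmv_add_right, map_add, hTv c, hTv' c]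
    by_cases hZ : ∀ c, T (Matrix.vecMulVec c (v + v')) = 0
    · exfalso
      have h3 := (hsum (Pi.single i0 1)).symm.trans (hZ (Pi.single i0 1))
      have h4 : ∀ i, G (Pi.single i0 1) i • y + G' (Pi.single i0 1) i • y' = 0 := by
        intro i
        have := congrFun h3 i
        rw [← vmv_row, ← vmv_row]
        calc Matrix.vecMulVec (G (Pi.single i0 1)) y i
              + Matrix.vecMulVec (G' (Pi.single i0 1)) y' i
            = (Matrix.vecMulVec (G (Pi.single i0 1)) y
              + Matrix.vecMulVec (G' (Pi.single i0 1)) y') i := rfl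
          _ = 0 := by rw [this]; rfl
      apply hGs
      funext i
      exact (hind _ _ (h4 i)).1
    · obtain ⟨y'', G'', hy'', hG'', hT''⟩ := structure_lemma hn hK T HT _ hZ
      have hrows : ∀ c i, G c i • y + G' c i • y' = G'' c i • y'' := by
        intro c i
        have h5 : Matrix.vecMulVec (G'' c) y'' =
            Matrix.vecMulVec (G c) y + Matrix.vecMulVec (G' c) y' := by
          rw [← hT'' c, hsum c]
        have := congrFun h5 i
        rw [vmv_row] at this
        have hadd : (Matrix.vecMulVec (G c) y + Matrix.vecMulVec (G' c) y') i
            = Matrix.vecMulVec (G c) y i + Matrix.vecMulVec (G' c) y' i := rfl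
        rw [hadd, vmv_row, vmv_row] at this
        exact this.symm
      let eG := LinearEquiv.ofBijective G ⟨hG, LinearMap.injective_iff_surjective.mp hG⟩
      have hFall : ∀ x : Fin n → K, x ≠ 0 →
          ∃ μ : K, (G' ∘ₗ eG.symm.toLinearMap) x = μ • x := by
        intro x hx
        set c := eG.symm x with hcdef
        have hGc : G c = x := by
          have : eG c = x := eG.apply_symm_apply x
          exact this
        obtain ⟨i1, hi1⟩ := Function.ne_iff.mp hx
        have hxi1 : G c i1 ≠ 0 := by rw [hGc]; exact hi1
        have hai1 : G'' c i1 ≠ 0 := by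
          intro h0
          have h6 := hrows c i1
          rw [h0, zero_smul] at h6
          exact hxi1 (hind _ _ h6).1
        have hco : ∀ i, G'' c i1 * G c i = G'' c i * G c i1 ∧
            G'' c i1 * G' c i = G'' c i * G' c i1 := by
          intro i
          have h7 : (G'' c i1 * G c i - G'' c i * G c i1) • y
              + (G'' c i1 * G' c i - G'' c i * G' c i1) • y' = 0 := by
            have e1 := hrows c i
            have e2 := hrows c i1
            have : G'' c i1 • (G c i • y + G' c i • y')
                - G'' c i • (G c i1 • y + G' c i1 • y') = 0 := by
              rw [e1, e2, smul_smul, smul_smul, mul_comm (G'' c i1) (G'' c i),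
                sub_self]
            rw [← this]
            module
          obtain ⟨ha, hb⟩ := hind _ _ h7
          exact ⟨sub_eq_zero.mp ha, sub_eq_zero.mp hb⟩
        refine ⟨(G c i1)⁻¹ * G' c i1, ?_⟩
        have hGcx : (G' ∘ₗ eG.symm.toLinearMap) x = G' c := rfl
        rw [hGcx]
        funext i
        obtain ⟨e1, e2⟩ := hco i
        have e4 : G c i1 * G' c i = G c i * G' c i1 := by
          apply mul_left_cancel₀ hai1
          linear_combination G c i1 * e2 - G' c i1 * e1
        have hxn : x i1 = G c i1 := by rw [hGc]
        simp only [Pi.smul_apply, smul_eq_mul]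
        rw [← hGc]
        field_simp
        linear_combination e4
      obtain ⟨μ, hμall⟩ := scalar_of_all_eigen hn _ hFall
      have hμc : ∀ c, G' c = μ • G c := by
        intro c
        have h8 := hμall (G c)
        have h9 : eG.symm (G c) = c := by
          have : eG.symm (eG c) = c := eG.symm_apply_apply c
          exact this
        simp only [LinearMap.comp_apply, LinearEquiv.coe_coe] at h8
        rw [h9] at h8
        exact h8
      have hμ0 : μ ≠ 0 := by
        intro h0
        have := hμc (Pi.single i0 1)
        rw [h0, zero_smul] at this
        exact single_one_ne_zero i0 (hG' (by rw [this, map_zero]))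
      exact ⟨μ, hμ0, hμc⟩


lemma matrix_eq_sum (A : Matrix (Fin n) (Fin n) K) :
    A = ∑ i : Fin n, Matrix.vecMulVec (Pi.single i 1) (A i) := by
  ext k j
  rw [Matrix.sum_apply]
  simp [Matrix.vecMulVec_apply, Pi.single_apply, ite_mul]

lemma mul_vmv_mul (P X : Matrix (Fin n) (Fin n) K) (c v : Fin n → K) :
    P * Matrix.vecMulVec c v * X =
      Matrix.vecMulVec (P.mulVec c) (Matrix.vecMul v X) := by
  ext i j
  simp only [Matrix.mul_apply, Matrix.vecMulVec_apply, Matrix.mulVec, Matrix.vecMul,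
    dotProduct, Finset.sum_mul, Finset.mul_sum]
  exact Finset.sum_congr rfl fun l _ => Finset.sum_congr rfl fun k _ => by ring

lemma rowSpace_mul_le (Q A : Matrix (Fin n) (Fin n) K) :
    rowSpace (Q * A) ≤ rowSpace A := by
  rw [rowSpace, Submodule.span_le]
  rintro x ⟨i, rfl⟩
  have h : (Q * A) i = ∑ k : Fin n, Q i k • A k := by
    funext j
    rw [Finset.sum_apply, Matrix.mul_apply]
    rfl
  rw [h]
  exact Submodule.sum_mem _ fun k _ =>
    Submodule.smul_mem _ _ (Submodule.subset_span ⟨k, rfl⟩)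

lemma rowSpace_unit_mul {P : Matrix (Fin n) (Fin n) K} (hP : IsUnit P)
    (A : Matrix (Fin n) (Fin n) K) : rowSpace (P * A) = rowSpace A := by
  refine le_antisymm (rowSpace_mul_le P A) ?_
  have h1 : (↑hP.unit⁻¹ : Matrix (Fin n) (Fin n) K) * (P * A) = A := by
    rw [← Matrix.mul_assoc, hP.val_inv_mul, Matrix.one_mul]
  calc rowSpace A = rowSpace ((↑hP.unit⁻¹ : Matrix (Fin n) (Fin n) K) * (P * A)) := by
        rw [h1]
    _ ≤ rowSpace (P * A) := rowSpace_mul_le _ _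

lemma rowSpace_mul_right (A X : Matrix (Fin n) (Fin n) K) :
    rowSpace (A * X) = Submodule.map X.vecMulLinear (rowSpace A) := by
  have hrows : ∀ i, (A * X) i = X.vecMulLinear (A i) := by
    intro i
    funext j
    rw [Matrix.vecMulLinear_apply]
    rw [Matrix.mul_apply]
    rfl
  rw [rowSpace, rowSpace, Submodule.map_span]
  congr 1
  ext w
  constructor
  · rintro ⟨i, rfl⟩
    exact ⟨A i, ⟨i, rfl⟩, (hrows i).symm⟩
  · rintro ⟨u, ⟨i, rfl⟩, rfl⟩
    exact ⟨i, hrows i⟩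

end LGreenAux


open LGreenAux

/-- Over a field in which every polynomial of degree exactly `n` has a root,
the linear maps on `M_n(K)` preserving Green's `L`-relation are precisely those
of the form `A ↦ P * A * X` with `P` invertible and `X` an arbitrary matrix. -/
theorem L_preserver_iff_form
    {K : Type*} [Field K] {n : ℕ} (hn : 1 ≤ n)
    (hK : ∀ p : Polynomial K, p.degree = n → ∃ x : K, p.eval x = 0)
    (T : Matrix (Fin n) (Fin n) K →ₗ[K] Matrix (Fin n) (Fin n) K) :
    (∀ A B : Matrix (Fin n) (Fin n) K,
        rowSpace A = rowSpace B → rowSpace (T A) = rowSpace (T B)) ↔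
      ∃ (P X : Matrix (Fin n) (Fin n) K), IsUnit P ∧
        ∀ A : Matrix (Fin n) (Fin n) K, T A = P * A * X := by
  constructor
  · intro HT
    classical
    by_cases hall : ∀ (v c : Fin n → K), T (Matrix.vecMulVec c v) = 0
    · refine ⟨1, 0, isUnit_one, fun A => ?_⟩
      have hTA : T A = 0 := by
        conv_lhs => rw [matrix_eq_sum A]
        rw [map_sum]
        apply Finset.sum_eq_zero
        intro i _
        exact hall (A i) (Pi.single i 1)
      rw [hTA, Matrix.mul_zero]
    · push_neg at hall
      obtain ⟨v0, hv0⟩ := hall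
      have hv0' : ¬ ∀ c, T (Matrix.vecMulVec c v0) = 0 := by
        obtain ⟨c, hc⟩ := hv0
        intro h
        exact hc (h c)
      obtain ⟨y0, G0, hy0, hG0, hT0⟩ := structure_lemma hn hK T HT v0 hv0'
      have hvdata : ∀ v : Fin n → K, ∃ w : Fin n → K,
          ∀ c, T (Matrix.vecMulVec c v) = Matrix.vecMulVec (G0 c) w := by
        intro v
        by_cases hv : ∀ c, T (Matrix.vecMulVec c v) = 0
        · exact ⟨0, fun c => by rw [hv c, vmv_zero_right]⟩
        · obtain ⟨y, G, hy, hG, hT⟩ := structure_lemma hn hK T HT v hv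
          obtain ⟨μ, hμ0, hμ⟩ := pairwise_prop hn hK T HT hy0 hG0 hT0 hy hG hT
          exact ⟨μ • y, fun c => by rw [hT c, hμ c, vmv_smul_left, ← vmv_smul_right]⟩
      choose yy hyy using hvdata
      set i0 : Fin n := ⟨0, hn⟩
      set c0 : Fin n → K := Pi.single i0 1 with hc0def
      have hGc0 : G0 c0 ≠ 0 := fun h => single_one_ne_zero i0 (hG0 (by rw [h, map_zero]))
      have hcancel : ∀ w w' : Fin n → K,
          Matrix.vecMulVec (G0 c0) w = Matrix.vecMulVec (G0 c0) w' → w = w' :=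
        fun w w' h => vmv_cancel_left hGc0 h
      have hadd : ∀ v v', yy (v + v') = yy v + yy v' := by
        intro v v'
        apply hcancel
        rw [← hyy (v + v') c0, vmv_add_right, map_add, hyy v c0, hyy v' c0, vmv_add_right]
      have hsmul : ∀ (a : K) v, yy (a • v) = a • yy v := by
        intro a v
        apply hcancel
        rw [← hyy (a • v) c0, vmv_smul_right, _root_.map_smul, hyy v c0, vmv_smul_right]
      let Yl : (Fin n → K) →ₗ[K] (Fin n → K) :=
        { toFun := yy
          map_add' := hadd
          map_smul' := by
            intro a v
            simp only [RingHom.id_apply]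
            exact hsmul a v }
      set P : Matrix (Fin n) (Fin n) K := LinearMap.toMatrix' G0 with hPdef
      set X : Matrix (Fin n) (Fin n) K := (LinearMap.toMatrix' Yl)ᵀ with hXdef
      have hPc : ∀ c, P.mulVec c = G0 c := by
        intro c
        rw [hPdef, ← Matrix.toLin'_apply, Matrix.toLin'_toMatrix']
      have hXv : ∀ v, Matrix.vecMul v X = yy v := by
        intro v
        rw [hXdef, Matrix.vecMul_transpose, ← Matrix.toLin'_apply, Matrix.toLin'_toMatrix']
        rfl
      have hPunit : IsUnit P := by
        have hsurj := LinearMap.injective_iff_surjective.mp hG0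
        let e := LinearEquiv.ofBijective G0 ⟨hG0, hsurj⟩
        have hcomp : G0 ∘ₗ (e.symm : (Fin n → K) →ₗ[K] (Fin n → K)) = LinearMap.id := by
          apply LinearMap.ext
          intro x
          exact e.apply_symm_apply x
        have hmul : P * LinearMap.toMatrix'
            (e.symm : (Fin n → K) →ₗ[K] (Fin n → K)) = 1 := by
          rw [hPdef, ← LinearMap.toMatrix'_comp, hcomp, LinearMap.toMatrix'_id]
        rw [Matrix.isUnit_iff_isUnit_det]
        apply IsUnit.of_mul_eq_one (LinearMap.toMatrix'
            (e.symm : (Fin n → K) →ₗ[K] (Fin n → K))).det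
        rw [← Matrix.det_mul, hmul, Matrix.det_one]
      refine ⟨P, X, hPunit, fun A => ?_⟩
      conv_lhs => rw [matrix_eq_sum A]
      rw [map_sum]
      conv_rhs => rw [matrix_eq_sum A]
      rw [Matrix.mul_sum, Finset.sum_mul]
      apply Finset.sum_congr rfl
      intro i _
      rw [hyy (A i) (Pi.single i 1), mul_vmv_mul, hPc, hXv]
  · rintro ⟨P, X, hP, hPX⟩ A B hAB
    rw [hPX A, hPX B]
    have h : ∀ M : Matrix (Fin n) (Fin n) K, rowSpace (P * M * X) =
        Submodule.map X.vecMulLinear (rowSpace M) := by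
      intro M
      rw [rowSpace_mul_right, rowSpace_unit_mul hP]
    rw [h A, h B, hAB]
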